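/- Let q ≥ 2 be an integer, and for integers 0 < d ≤ q−1, 0 < b ≤ q define f(d,b) = b−1 if b ≤ d ≤ q−b; = q−d−1 if b ≤ d and q−b < d; = q−b if q−b < d < b; and = d if d < b and d ≤ q−b. Then the number of pairs (d,b) with 0 < d ≤ q−1, 0 < b ≤ q and f(d,b) = 0 equals 3q − 4. (That is, there are exactly 3q−4 designed distances δ = dq+b in the range considered for which the two-point improved Hermitian code has the same redundancy as the one-point improved code.) -/

import Mathlib

def redundancyDiff (q d b : ℤ) : ℤ :=
  if b ≤ d ∧ d ≤ q - b then b - 1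
  else if b ≤ d ∧ q - b < d then q - d - 1
  else if q - b < d ∧ d < b then q - b
  else d

theorem hermitian_zero_gain_count (q : ℤ) (hq : 2 ≤ q) :
    (Nat.card {p : ℤ × ℤ // 0 < p.1 ∧ p.1 ≤ q - 1 ∧ 0 < p.2 ∧ p.2 ≤ q ∧
      redundancyDiff q p.1 p.2 = 0} : ℤ) = 3 * q - 4 := by
  classical
  set A := (Finset.Icc (1:ℤ) (q-1)).image (fun d => (d, (1:ℤ))) with hA
  set B := (Finset.Icc (2:ℤ) (q-1)).image (fun b => ((q-1 : ℤ), b)) with hB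
  set C := (Finset.Icc (1:ℤ) (q-1)).image (fun d => (d, q)) with hC
  have memA : ∀ p : ℤ × ℤ, p ∈ A ↔ 1 ≤ p.1 ∧ p.1 ≤ q - 1 ∧ p.2 = 1 := by
    rintro ⟨d, b⟩
    simp only [hA, Finset.mem_image, Finset.mem_Icc, Prod.ext_iff, eq_comm, and_assoc]
    constructor
    · rintro ⟨a, h1, h2, rfl, h3⟩; exact ⟨h1, h2, h3⟩
    · rintro ⟨h1, h2, h3⟩; exact ⟨d, h1, h2, rfl, h3⟩
  have memB : ∀ p : ℤ × ℤ, p ∈ B ↔ p.1 = q - 1 ∧ 2 ≤ p.2 ∧ p.2 ≤ q - 1 := by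
    rintro ⟨d, b⟩
    simp [hB, Finset.mem_image, Finset.mem_Icc, Prod.ext_iff, eq_comm]
    tauto
  have memC : ∀ p : ℤ × ℤ, p ∈ C ↔ 1 ≤ p.1 ∧ p.1 ≤ q - 1 ∧ p.2 = q := by
    rintro ⟨d, b⟩
    simp only [hC, Finset.mem_image, Finset.mem_Icc, Prod.ext_iff, and_assoc]
    constructor
    · rintro ⟨a, h1, h2, rfl, h3⟩; exact ⟨h1, h2, h3.symm⟩
    · rintro ⟨h1, h2, h3⟩; exact ⟨d, h1, h2, rfl, h3.symm⟩
  have hset : {p : ℤ × ℤ | 0 < p.1 ∧ p.1 ≤ q - 1 ∧ 0 < p.2 ∧ p.2 ≤ q ∧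
      redundancyDiff q p.1 p.2 = 0} = ↑(A ∪ B ∪ C) := by
    ext p
    simp only [Set.mem_setOf_eq, Finset.coe_union, Set.mem_union, Finset.mem_coe,
      memA, memB, memC]
    unfold redundancyDiff
    split_ifs <;> omega
  have hcard : Nat.card {p : ℤ × ℤ // 0 < p.1 ∧ p.1 ≤ q - 1 ∧ 0 < p.2 ∧ p.2 ≤ q ∧
      redundancyDiff q p.1 p.2 = 0} = (A ∪ B ∪ C).card := by
    have : {p : ℤ × ℤ // 0 < p.1 ∧ p.1 ≤ q - 1 ∧ 0 < p.2 ∧ p.2 ≤ q ∧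
        redundancyDiff q p.1 p.2 = 0} = {p : ℤ × ℤ // p ∈ (↑(A ∪ B ∪ C) : Set (ℤ × ℤ))} := by
      rw [← hset]; rfl
    rw [this, Nat.card_coe_set_eq, Set.ncard_coe_finset]
  rw [hcard]
  have hAB : Disjoint A B := by
    rw [Finset.disjoint_left]; intro p hpA hpB
    rw [memA] at hpA; rw [memB] at hpB; omega
  have hABC : Disjoint (A ∪ B) C := by
    rw [Finset.disjoint_left]; intro p hp hpC
    rw [memC] at hpC
    rcases Finset.mem_union.mp hp with h | h
    · rw [memA] at h; omega
    · rw [memB] at h; omega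
  rw [Finset.card_union_of_disjoint hABC, Finset.card_union_of_disjoint hAB]
  have cA : A.card = (q - 1).toNat := by
    rw [hA, Finset.card_image_of_injective _ (fun a b h => by simpa using congrArg Prod.fst h),
      Int.card_Icc]
    congr 1; omega
  have cB : B.card = (q - 2).toNat := by
    rw [hB, Finset.card_image_of_injective _ (fun a b h => by simpa using congrArg Prod.snd h),
      Int.card_Icc]
    congr 1; omega
  have cC : C.card = (q - 1).toNat := by
    rw [hC, Finset.card_image_of_injective _ (fun a b h => by simpa using congrArg Prod.fst h),
      Int.card_Icc]
    congr 1; omega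
  rw [cA, cB, cC]
  push_cast
  omega
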